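/- (Moment asymptotics, from the proof of Theorem 5) For every integer k ≥ 1 there exists a finite constant C_k > 0, not depending on α, such that for every α > 0, lim_{p→∞} ((α+p)/α) · ∫_ℝ Φ(x)^k · τ_p⁻¹ φ((x − μ_p)/τ_p) dx = C_k; that is, the k-th moment of the marginal occurrence probability π = Φ(β), β ~ N(μ_p, τ_p²), satisfies E(π^k) ~ (α/(α+p)) C_k as p → ∞. -/

import Mathlib

set_option maxHeartbeats 1000000

open MeasureTheory Real Filter

/-- The standard normal density `φ(x) = (2π)^{-1/2} exp(-x²/2)`. -/
noncomputable def stdNormalPDF (x : ℝ) : ℝ :=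
  (Real.sqrt (2 * Real.pi))⁻¹ * Real.exp (-x ^ 2 / 2)

/-- The standard normal CDF `Φ(x) = ∫_{-∞}^x φ(t) dt`. -/
noncomputable def stdNormalCDF (x : ℝ) : ℝ :=
  ∫ t in Set.Iio x, stdNormalPDF t

/-- `τ_p = √(2 log p)`. -/
noncomputable def tauP (p : ℕ) : ℝ := Real.sqrt (2 * Real.log p)

/-- The density of `N(μ_p, τ_p²)` at `x`, namely `τ_p⁻¹ φ((x - μ_p)/τ_p)`. -/
noncomputable def mvpDens (μ : ℕ → ℝ) (p : ℕ) (x : ℝ) : ℝ :=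
  (tauP p)⁻¹ * stdNormalPDF ((x - μ p) / tauP p)

open Set

noncomputable def aP (μ : ℕ → ℝ) (p : ℕ) : ℝ := μ p / Real.sqrt (1 + tauP p ^ 2)



lemma pdf_pos (x : ℝ) : 0 < stdNormalPDF x := by unfold stdNormalPDF; positivity

lemma pdf_cont : Continuous stdNormalPDF := by unfold stdNormalPDF; continuity

lemma pdf_integrable : Integrable stdNormalPDF := by
  unfold stdNormalPDF
  apply Integrable.const_mul
  have : ∀ x : ℝ, -x ^ 2 / 2 = -(2⁻¹ : ℝ) * x ^ 2 := by intro x; ring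
  simp_rw [this]
  exact integrable_exp_neg_mul_sq (by norm_num)

lemma pdf_total : ∫ x : ℝ, stdNormalPDF x = 1 := by
  unfold stdNormalPDF
  rw [integral_const_mul]
  have : ∀ x : ℝ, -x ^ 2 / 2 = -(2⁻¹ : ℝ) * x ^ 2 := by intro x; ring
  simp_rw [this, integral_gaussian]
  rw [inv_mul_eq_div, div_eq_one_iff_eq]
  · congr 1; ring
  · positivity

lemma pdf_le (x : ℝ) : stdNormalPDF x ≤ Real.exp (-x ^ 2 / 2) := by
  unfold stdNormalPDF
  have h1 : (1:ℝ) ≤ Real.sqrt (2 * π) := by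
    rw [show (1:ℝ) = Real.sqrt 1 by simp]
    exact Real.sqrt_le_sqrt (by nlinarith [Real.pi_gt_three])
  calc (Real.sqrt (2 * π))⁻¹ * Real.exp (-x ^ 2 / 2)
      ≤ 1 * Real.exp (-x ^ 2 / 2) := by
        apply mul_le_mul_of_nonneg_right _ (Real.exp_nonneg _)
        exact inv_le_one_of_one_le₀ h1
    _ = Real.exp (-x ^ 2 / 2) := one_mul _

lemma cdf_pos (x : ℝ) : 0 < stdNormalCDF x := by
  unfold stdNormalCDF
  apply (setIntegral_pos_iff_support_of_nonneg_ae _ _).2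
  · have : (Function.support stdNormalPDF) = Set.univ := by
      ext t; simp [Function.support, (pdf_pos t).ne']
    rw [this, Set.univ_inter]
    simp [Real.volume_Iio]
  · exact Filter.Eventually.of_forall fun t => (pdf_pos t).le
  · exact pdf_integrable.integrableOn

lemma cdf_mono : Monotone stdNormalCDF := by
  intro x y hxy
  apply setIntegral_mono_set pdf_integrable.integrableOn
    (Filter.Eventually.of_forall fun t => (pdf_pos t).le)
  exact Filter.Eventually.of_forall (Set.Iio_subset_Iio hxy)

lemma cdf_le_one (x : ℝ) : stdNormalCDF x ≤ 1 := by
  rw [← pdf_total]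
  exact setIntegral_le_integral pdf_integrable
    (Filter.Eventually.of_forall fun t => (pdf_pos t).le)

lemma cdf_nonneg (x : ℝ) : 0 ≤ stdNormalCDF x := (cdf_pos x).le

lemma cdf_measurable : Measurable stdNormalCDF := cdf_mono.measurable


lemma sq_tendsto_atBot : Tendsto (fun t : ℝ => t ^ 2) atBot atTop := by
  apply tendsto_atTop_mono' atBot _ (tendsto_neg_atBot_atTop)
  filter_upwards [eventually_le_atBot (-1 : ℝ)] with t ht
  nlinarith

lemma pdf_tendsto_atBot : Tendsto stdNormalPDF atBot (nhds 0) := by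
  apply squeeze_zero (fun t => (pdf_pos t).le) pdf_le
  apply Real.tendsto_exp_atBot.comp
  apply Filter.Tendsto.atBot_div_const (by norm_num : (0:ℝ) < 2)
  exact tendsto_neg_atTop_atBot.comp sq_tendsto_atBot

lemma pdf_hasDeriv (t : ℝ) : HasDerivAt stdNormalPDF (-t * stdNormalPDF t) t := by
  unfold stdNormalPDF
  have h : HasDerivAt (fun t : ℝ => -t ^ 2 / 2) (-t) t := by
    have := ((hasDerivAt_pow 2 t).neg).div_const 2
    simpa using this.congr_deriv (by ring)
  have := (h.exp).const_mul (Real.sqrt (2 * π))⁻¹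
  refine HasDerivAt.congr_deriv this (Eq.symm ?_)
  ring

lemma mills_upper {x : ℝ} (hx : x < 0) : stdNormalCDF x ≤ stdNormalPDF x / (-x) := by
  have hint : IntegrableOn (fun t => stdNormalPDF t * (1 + 1/t^2)) (Iic x) := by
    apply Integrable.mono ((pdf_integrable.const_mul (1 + 1/x^2)).integrableOn)
    · apply (pdf_cont.measurable.mul _).aestronglyMeasurable
      exact (measurable_const.add ((measurable_const.div (measurable_id.pow_const 2)))).comp measurable_id
    · filter_upwards [ae_restrict_mem measurableSet_Iic] with t ht
      have ht2 : t ≤ x := ht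
      have hx2 : 0 < x^2 := by nlinarith
      have ht0 : t ≠ 0 := by intro h; rw [h] at ht2; linarith
      have htsq : 0 < t^2 := by positivity
      have htx : x^2 ≤ t^2 := by nlinarith
      have h1 : 1/t^2 ≤ 1/x^2 := by
        apply div_le_div_of_nonneg_left (by norm_num) hx2 htx
      have hp1 : (0:ℝ) < 1 + 1/t^2 := by positivity
      have hp2 : (0:ℝ) < 1 + 1/x^2 := by positivity
      simp only [Real.norm_eq_abs]
      rw [abs_of_pos (mul_pos (pdf_pos t) hp1), abs_of_pos (mul_pos hp2 (pdf_pos t))]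
      rw [mul_comm (1 + 1/x^2)]
      exact mul_le_mul_of_nonneg_left (by linarith) (pdf_pos t).le
  have hftc : ∫ t in Iic x, stdNormalPDF t * (1 + 1/t^2) = stdNormalPDF x / (-x) := by
    have := integral_Iic_of_hasDerivAt_of_tendsto' (f := fun t => -stdNormalPDF t / t)
      (f' := fun t => stdNormalPDF t * (1 + 1/t^2)) (a := x) (m := 0) ?_ hint ?_
    · rw [this, sub_zero]
      show -stdNormalPDF x / x = stdNormalPDF x / -x
      rw [neg_div, ← div_neg]
    · intro t ht
      have htne : t ≠ 0 := by have : t ≤ x := ht; intro h; rw [h] at this; linarith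
      have := ((pdf_hasDeriv t).neg).div (hasDerivAt_id t) htne
      refine HasDerivAt.congr_deriv this (Eq.symm ?_)
      simp only [id, Pi.neg_apply]
      field_simp
      ring
    · apply squeeze_zero' (g := stdNormalPDF)
      · filter_upwards [eventually_le_atBot (-1 : ℝ)] with t ht
        rw [neg_div, ← div_neg]
        exact div_nonneg (pdf_pos t).le (by linarith)
      · filter_upwards [eventually_le_atBot (-1 : ℝ)] with t ht
        rw [neg_div, ← div_neg]
        exact div_le_self (pdf_pos t).le (by linarith)
      · exact pdf_tendsto_atBot
  unfold stdNormalCDF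
  rw [← hftc, ← integral_Iic_eq_integral_Iio]
  apply setIntegral_mono_on pdf_integrable.integrableOn hint measurableSet_Iic
  intro t ht
  have ht2 : t ≤ x := ht
  have ht0 : t ≠ 0 := by intro h; rw [h] at ht2; linarith
  have htsq : (0:ℝ) < 1/t^2 := by positivity
  nlinarith [pdf_pos t]


lemma mills_lower {x : ℝ} (hx : x ≤ -1) :
    (-x) * stdNormalPDF x / (x^2 + 1) ≤ stdNormalCDF x := by
  set g' : ℝ → ℝ := fun t => stdNormalPDF t * (1 - 2/(t^2+1)^2) with hg'
  have hd : ∀ t : ℝ, HasDerivAt (fun t => -(t * stdNormalPDF t) / (t^2+1)) (g' t) t := by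
    intro t
    have hden : (t^2 + 1 : ℝ) ≠ 0 := by positivity
    have hn : HasDerivAt (fun t : ℝ => -(t * stdNormalPDF t)) (stdNormalPDF t * (t^2 - 1)) t := by
      have := ((hasDerivAt_id t).mul (pdf_hasDeriv t)).neg
      refine HasDerivAt.congr_deriv this (Eq.symm ?_)
      simp
      ring
    have hdd : HasDerivAt (fun t : ℝ => t^2 + 1) (2*t) t := by
      simpa using (hasDerivAt_pow 2 t).add_const 1
    have := hn.div hdd hden
    refine HasDerivAt.congr_deriv this (Eq.symm ?_)
    rw [hg']
    field_simp
    ring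
  have hg'cont : Continuous g' := by
    apply pdf_cont.mul
    apply Continuous.sub continuous_const
    apply Continuous.div continuous_const (by continuity)
    intro t
    positivity
  have hint : IntegrableOn g' (Iic x) := by
    apply Integrable.mono pdf_integrable.integrableOn hg'cont.aestronglyMeasurable.restrict
    filter_upwards with t
    simp only [Real.norm_eq_abs, hg']
    rw [abs_mul, abs_of_pos (pdf_pos t)]
    have h1 : (1:ℝ) ≤ (t^2+1)^2 := by nlinarith [sq_nonneg t]
    have h2 : 0 < (t^2+1)^2 := by positivity
    have h3 : 2/(t^2+1)^2 ≤ 2 := by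
      rw [div_le_iff₀ h2]; nlinarith
    have h4 : 0 ≤ 2/(t^2+1)^2 := by positivity
    calc stdNormalPDF t * |1 - 2/(t^2+1)^2| ≤ stdNormalPDF t * 1 := by
          apply mul_le_mul_of_nonneg_left _ (pdf_pos t).le
          rw [abs_le]; constructor <;> linarith
      _ = stdNormalPDF t := mul_one _
  have hftc : ∫ t in Iic x, g' t = (-x) * stdNormalPDF x / (x^2+1) := by
    have := integral_Iic_of_hasDerivAt_of_tendsto' (f := fun t => -(t * stdNormalPDF t) / (t^2+1))
      (f' := g') (a := x) (m := 0) (fun t _ => hd t) hint ?_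
    · rw [this, sub_zero]
      show -(x * stdNormalPDF x) / (x^2+1) = _
      ring
    · apply squeeze_zero' (g := stdNormalPDF)
      · filter_upwards [eventually_le_atBot (-1 : ℝ)] with t ht
        have h1 : 0 ≤ -(t * stdNormalPDF t) := by nlinarith [pdf_pos t]
        positivity
      · filter_upwards [eventually_le_atBot (-1 : ℝ)] with t ht
        rw [div_le_iff₀ (by positivity)]
        nlinarith [mul_pos (pdf_pos t) (show (0:ℝ) < t^2+t+1 by nlinarith [sq_nonneg (2*t+1)])]
      · exact pdf_tendsto_atBot
  unfold stdNormalCDF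
  rw [← hftc, ← integral_Iic_eq_integral_Iio]
  apply setIntegral_mono_on hint pdf_integrable.integrableOn measurableSet_Iic
  intro t ht
  rw [hg']
  have h4 : 0 ≤ 2/(t^2+1)^2 := by positivity
  nlinarith [pdf_pos t]


lemma cdf_le_gauss {x : ℝ} (hx : x ≤ 0) :
    stdNormalCDF x ≤ Real.exp (2⁻¹) * Real.exp (-x^2/2) := by
  rcases le_or_gt x (-1) with h | h
  · calc stdNormalCDF x ≤ stdNormalPDF x / (-x) := mills_upper (by linarith)
      _ ≤ stdNormalPDF x := div_le_self (pdf_pos x).le (by linarith)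
      _ ≤ Real.exp (-x^2/2) := pdf_le x
      _ ≤ Real.exp (2⁻¹) * Real.exp (-x^2/2) := by
          nlinarith [Real.exp_pos (-x^2/2), Real.one_le_exp (by norm_num : (0:ℝ) ≤ (2⁻¹:ℝ))]
  · calc stdNormalCDF x ≤ 1 := cdf_le_one x
      _ ≤ Real.exp (2⁻¹) * Real.exp (-x^2/2) := by
          rw [← Real.exp_add, Real.one_le_exp_iff]
          nlinarith

/-- The dominating function. -/
noncomputable def domG (x : ℝ) : ℝ :=
  (Set.Ioi (0:ℝ)).indicator (fun y => Real.exp (-2⁻¹ * y)) x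
  + (Set.Ioi (0:ℝ)).indicator (fun y => Real.exp (-2⁻¹ * y)) (-x)
  + Real.exp (9/2) * Real.exp (-(4⁻¹) * x^2)

lemma domG_integrable : Integrable domG := by
  unfold domG
  have h1 : Integrable ((Set.Ioi (0:ℝ)).indicator (fun y => Real.exp (-2⁻¹ * y))) := by
    rw [integrable_indicator_iff measurableSet_Ioi]
    exact exp_neg_integrableOn_Ioi 0 (by norm_num)
  exact ((h1.add h1.comp_neg).add
    ((integrable_exp_neg_mul_sq (by norm_num : (0:ℝ) < 4⁻¹)).const_mul _))

lemma domG_bound {c d x : ℝ} (hc1 : -2 ≤ c) (hc2 : c ≤ -2⁻¹) (hd : 0 ≤ d) {k : ℕ} (hk : 1 ≤ k) :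
    stdNormalCDF x ^ k * Real.exp (c * x - d * x^2) ≤ domG x := by
  have hcdf0 : 0 ≤ stdNormalCDF x := (cdf_pos x).le
  have hpowle : stdNormalCDF x ^ k ≤ stdNormalCDF x := by
    calc stdNormalCDF x ^ k ≤ stdNormalCDF x ^ 1 :=
        pow_le_pow_of_le_one hcdf0 (cdf_le_one x) hk
      _ = stdNormalCDF x := pow_one _
  have hpow1 : stdNormalCDF x ^ k ≤ 1 := by
    calc stdNormalCDF x ^ k ≤ stdNormalCDF x := hpowle
      _ ≤ 1 := cdf_le_one x
  have hpownn : 0 ≤ stdNormalCDF x ^ k := pow_nonneg hcdf0 k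
  unfold domG
  rcases le_or_gt x 0 with hx | hx
  · -- use the gaussian term
    have hindnn : 0 ≤ (Set.Ioi (0:ℝ)).indicator (fun y => Real.exp (-2⁻¹ * y)) x :=
      Set.indicator_nonneg (fun y _ => (Real.exp_pos _).le) x
    have hindnn2 : 0 ≤ (Set.Ioi (0:ℝ)).indicator (fun y => Real.exp (-2⁻¹ * y)) (-x) :=
      Set.indicator_nonneg (fun y _ => (Real.exp_pos _).le) (-x)
    have key : stdNormalCDF x ^ k * Real.exp (c * x - d * x^2)
        ≤ Real.exp (9/2) * Real.exp (-(4⁻¹) * x^2) := by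
      calc stdNormalCDF x ^ k * Real.exp (c * x - d * x^2)
          ≤ (Real.exp (2⁻¹) * Real.exp (-x^2/2)) * Real.exp (c * x - d * x^2) := by
            apply mul_le_mul_of_nonneg_right _ (Real.exp_pos _).le
            calc stdNormalCDF x ^ k ≤ stdNormalCDF x := hpowle
              _ ≤ _ := cdf_le_gauss hx
        _ = Real.exp (2⁻¹ + (-x^2/2) + (c * x - d * x^2)) := by
            rw [← Real.exp_add, ← Real.exp_add]
        _ ≤ Real.exp (9/2 + -(4⁻¹) * x^2) := by
            apply Real.exp_le_exp.2
            nlinarith [sq_nonneg (x + 4), mul_nonneg hd (sq_nonneg x),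
              mul_le_mul_of_nonneg_right hc1 (neg_nonneg.2 hx)]
        _ = Real.exp (9/2) * Real.exp (-(4⁻¹) * x^2) := Real.exp_add _ _
    linarith
  · -- use the indicator term at x
    have hind : (Set.Ioi (0:ℝ)).indicator (fun y => Real.exp (-2⁻¹ * y)) x
        = Real.exp (-2⁻¹ * x) := Set.indicator_of_mem hx _
    have hindnn2 : 0 ≤ (Set.Ioi (0:ℝ)).indicator (fun y => Real.exp (-2⁻¹ * y)) (-x) :=
      Set.indicator_nonneg (fun y _ => (Real.exp_pos _).le) (-x)
    have hgauss : 0 ≤ Real.exp (9/2) * Real.exp (-(4⁻¹) * x^2) := by positivity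
    have key : stdNormalCDF x ^ k * Real.exp (c * x - d * x^2) ≤ Real.exp (-2⁻¹ * x) := by
      calc stdNormalCDF x ^ k * Real.exp (c * x - d * x^2)
          ≤ 1 * Real.exp (c * x - d * x^2) :=
            mul_le_mul_of_nonneg_right hpow1 (Real.exp_pos _).le
        _ = Real.exp (c * x - d * x^2) := one_mul _
        _ ≤ Real.exp (-2⁻¹ * x) := by
            apply Real.exp_le_exp.2
            nlinarith [mul_nonneg hd (sq_nonneg x), mul_le_mul_of_nonneg_right hc2 hx.le]
    linarith [hind ▸ key]


lemma fp_meas (k : ℕ) (c d : ℝ) :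
    AEStronglyMeasurable (fun x : ℝ => stdNormalCDF x ^ k * Real.exp (c * x - d * x^2)) volume := by
  apply Measurable.aestronglyMeasurable
  exact ((cdf_measurable.pow_const k).mul ((Real.continuous_exp.comp (by continuity)).measurable))

lemma fp_nonneg (k : ℕ) (c d : ℝ) (x : ℝ) :
    0 ≤ stdNormalCDF x ^ k * Real.exp (c * x - d * x^2) :=
  mul_nonneg (pow_nonneg (cdf_pos x).le k) (Real.exp_pos _).le

lemma limit_integrand_eq (k : ℕ) (x : ℝ) :
    stdNormalCDF x ^ k * Real.exp (-x) = stdNormalCDF x ^ k * Real.exp ((-1) * x - 0 * x^2) := by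
  norm_num

lemma limit_integrable (k : ℕ) (hk : 1 ≤ k) :
    Integrable (fun x : ℝ => stdNormalCDF x ^ k * Real.exp (-x)) := by
  apply Integrable.mono domG_integrable (by simpa using fp_meas k (-1) 0)
  filter_upwards with x
  rw [Real.norm_eq_abs, Real.norm_eq_abs, abs_of_nonneg (by simpa using fp_nonneg k (-1) 0 x)]
  have h := domG_bound (c := -1) (d := 0) (x := x) (by norm_num) (by norm_num) le_rfl hk
  calc stdNormalCDF x ^ k * Real.exp (-x)
      = stdNormalCDF x ^ k * Real.exp ((-1) * x - 0 * x^2) := limit_integrand_eq k x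
    _ ≤ domG x := h
    _ ≤ |domG x| := le_abs_self _

lemma limit_integral_pos (k : ℕ) (hk : 1 ≤ k) :
    0 < ∫ x : ℝ, stdNormalCDF x ^ k * Real.exp (-x) := by
  rw [integral_pos_iff_support_of_nonneg (fun x => fp_nonneg' k x) (limit_integrable k hk)]
  · have : (Function.support fun x : ℝ => stdNormalCDF x ^ k * Real.exp (-x)) = Set.univ := by
      ext x
      simp only [Function.mem_support, Set.mem_univ, iff_true]
      exact ne_of_gt (mul_pos (pow_pos (cdf_pos x) k) (Real.exp_pos _))
    rw [this]
    simp
  where fp_nonneg' (k : ℕ) (x : ℝ) : 0 ≤ stdNormalCDF x ^ k * Real.exp (-x) :=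
    mul_nonneg (pow_nonneg (cdf_pos x).le k) (Real.exp_pos _).le

lemma J_tendsto (k : ℕ) (hk : 1 ≤ k) (c d : ℕ → ℝ)
    (hc : Tendsto c atTop (nhds (-1))) (hd : Tendsto d atTop (nhds 0))
    (hd0 : ∀ᶠ p in atTop, 0 ≤ d p) :
    Tendsto (fun p => ∫ x : ℝ, stdNormalCDF x ^ k * Real.exp (c p * x - d p * x^2)) atTop
      (nhds (∫ x : ℝ, stdNormalCDF x ^ k * Real.exp (-x))) := by
  apply tendsto_integral_filter_of_dominated_convergence domG
  · exact Filter.Eventually.of_forall fun p => fp_meas k (c p) (d p)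
  · have hc1 : ∀ᶠ p in atTop, -2 ≤ c p := hc.eventually (eventually_ge_nhds (by norm_num))
    have hc2 : ∀ᶠ p in atTop, c p ≤ -2⁻¹ := hc.eventually (eventually_le_nhds (by norm_num))
    filter_upwards [hc1, hc2, hd0] with p h1 h2 h3
    filter_upwards with x
    rw [Real.norm_eq_abs, abs_of_nonneg (fp_nonneg k (c p) (d p) x)]
    exact domG_bound h1 h2 h3 hk
  · exact domG_integrable
  · filter_upwards with x
    have h1 : Tendsto (fun p => c p * x - d p * x^2) atTop (nhds (-x)) := by
      have := (hc.mul_const x).sub (hd.mul_const (x^2))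
      simpa using this
    exact (Real.continuous_exp.continuousAt.tendsto.comp h1).const_mul _


section Asymp

variable {α : ℝ} (hα : 0 < α) {μ : ℕ → ℝ}
  (hμ : ∀ p : ℕ, 2 ≤ p → stdNormalCDF (μ p / Real.sqrt (1 + tauP p ^ 2)) = α / (α + p))


lemma tau_pos {p : ℕ} (hp : 2 ≤ p) : 0 < tauP p := by
  unfold tauP
  apply Real.sqrt_pos.2
  have : (1:ℝ) < (p:ℝ) := by exact_mod_cast Nat.lt_of_lt_of_le one_lt_two hp
  have := Real.log_pos this
  linarith

lemma tau_sq {p : ℕ} (hp : 2 ≤ p) : tauP p ^ 2 = 2 * Real.log p := by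
  unfold tauP
  rw [Real.sq_sqrt]
  have : (1:ℝ) ≤ (p:ℝ) := by exact_mod_cast Nat.one_le_of_lt hp
  have := Real.log_nonneg this
  linarith

include hα hμ in
lemma aP_le_neg_one : ∀ᶠ p : ℕ in atTop, aP μ p ≤ -1 := by
  have h0 : Tendsto (fun p : ℕ => α / (α + p)) atTop (nhds 0) := by
    apply Tendsto.div_atTop tendsto_const_nhds
    exact tendsto_atTop_add_const_left _ α tendsto_natCast_atTop_atTop
  filter_upwards [h0.eventually_lt_const (cdf_pos (-1)), eventually_ge_atTop 2] with p h1 h2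
  by_contra h
  push_neg at h
  have h5 : stdNormalCDF (aP μ p) = α / (α + p) := hμ p h2
  have := cdf_mono h.le
  rw [h5] at this
  linarith

include hα hμ in
lemma q_upper : ∀ᶠ p : ℕ in atTop,
    aP μ p ^ 2 ≤ 2 * (Real.log (α + p) - Real.log α) + 1 := by
  filter_upwards [aP_le_neg_one hα hμ, eventually_ge_atTop 2] with p h1 h2
  have hap : (0:ℝ) < α + p := by positivity
  have h3 : stdNormalCDF (aP μ p) = α / (α + ↑p) := hμ p h2
  have h4 := cdf_le_gauss (show aP μ p ≤ 0 by linarith)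
  rw [h3] at h4
  have h5 : α / (α + p) = Real.exp (Real.log α - Real.log (α + p)) := by
    rw [Real.exp_sub, Real.exp_log hα, Real.exp_log hap]
  rw [h5, ← Real.exp_add] at h4
  have := Real.exp_le_exp.1 h4
  linarith

include hα hμ in
lemma q_lower : ∀ᶠ p : ℕ in atTop,
    2 * (Real.log (α + p) - Real.log α) - 2 - 2 * Real.log (aP μ p ^ 2 + 1)
      ≤ aP μ p ^ 2 := by
  filter_upwards [aP_le_neg_one hα hμ, eventually_ge_atTop 2] with p h1 h2
  set a := aP μ p with ha
  have hap : (0:ℝ) < α + p := by positivity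
  have h3 : stdNormalCDF a = α / (α + ↑p) := hμ p h2
  have h4 := mills_lower h1
  rw [h3] at h4
  have hq1 : (0:ℝ) < a^2 + 1 := by positivity
  -- pdf lower bound
  have hsqrt : Real.sqrt (2 * π) ≤ Real.exp 1 := by
    have h2pi : (2:ℝ) * π ≤ 6.3 := by nlinarith [Real.pi_lt_d2]
    have hA : Real.sqrt (2*π) ≤ Real.sqrt 6.3 := Real.sqrt_le_sqrt h2pi
    have h63 : Real.sqrt 6.3 ≤ 2.6 := by
      rw [show (2.6:ℝ) = Real.sqrt (2.6^2) from (Real.sqrt_sq (by norm_num)).symm]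
      exact Real.sqrt_le_sqrt (by norm_num)
    have := Real.exp_one_gt_d9
    linarith
  have hsqrtpos : (0:ℝ) < Real.sqrt (2*π) := Real.sqrt_pos.2 (by positivity)
  have hphi : Real.exp (-1 - a^2/2) ≤ (-a) * stdNormalPDF a := by
    have he1 : Real.exp (-1) ≤ (Real.sqrt (2*π))⁻¹ := by
      rw [Real.exp_neg]
      exact inv_anti₀ hsqrtpos hsqrt
    have hpdf : Real.exp (-1) * Real.exp (-a^2/2) ≤ stdNormalPDF a := by
      unfold stdNormalPDF
      exact mul_le_mul_of_nonneg_right he1 (Real.exp_nonneg _)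
    calc Real.exp (-1 - a^2/2) = Real.exp (-1) * Real.exp (-a^2/2) := by
          rw [← Real.exp_add]; ring_nf
      _ ≤ stdNormalPDF a := hpdf
      _ = 1 * stdNormalPDF a := (one_mul _).symm
      _ ≤ (-a) * stdNormalPDF a :=
          mul_le_mul_of_nonneg_right (by linarith) (pdf_pos a).le
  have h6 : Real.exp (-1 - a^2/2) ≤ (a^2+1) * (α/(α+↑p)) := by
    calc Real.exp (-1 - a^2/2) ≤ (-a) * stdNormalPDF a := hphi
      _ ≤ (a^2+1) * (α/(α+↑p)) := by
          rw [div_le_iff₀ hq1] at h4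
          linarith
  have h7 : (a^2+1) * (α/(α+↑p)) = Real.exp (Real.log (a^2+1) + Real.log α - Real.log (α+↑p)) := by
    rw [Real.exp_sub, Real.exp_add, Real.exp_log hq1, Real.exp_log hα, Real.exp_log hap]
    ring
  rw [h7] at h6
  have := Real.exp_le_exp.1 h6
  linarith

end Asymp

section Limits
variable {α : ℝ} (hα : 0 < α) {μ : ℕ → ℝ}
  (hμ : ∀ p : ℕ, 2 ≤ p → stdNormalCDF (μ p / Real.sqrt (1 + tauP p ^ 2)) = α / (α + p))

lemma log_le_two_sqrt {y : ℝ} (hy : 1 ≤ y) : Real.log y ≤ 2 * Real.sqrt y := by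
  have h0 : (0:ℝ) < y := by linarith
  have h1 : Real.log y = 2 * Real.log (Real.sqrt y) := by
    rw [Real.log_sqrt h0.le]; ring
  have h2 : Real.log (Real.sqrt y) ≤ Real.sqrt y - 1 :=
    Real.log_le_sub_one_of_pos (Real.sqrt_pos.2 h0)
  nlinarith [Real.sqrt_nonneg y]

lemma hlogp : Tendsto (fun p : ℕ => Real.log p) atTop atTop :=
  Real.tendsto_log_atTop.comp tendsto_natCast_atTop_atTop

lemma hinv : Tendsto (fun p : ℕ => (Real.log p)⁻¹) atTop (nhds 0) :=
  hlogp.inv_tendsto_atTop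

include hα in
lemma hLlog : Tendsto (fun p : ℕ => (Real.log (α + p) - Real.log α) / Real.log p)
    atTop (nhds 1) := by
  have hdiv : Tendsto (fun p : ℕ => α / p) atTop (nhds 0) :=
    Tendsto.div_atTop tendsto_const_nhds tendsto_natCast_atTop_atTop
  have h1 : Tendsto (fun p : ℕ => 1 + α / p) atTop (nhds 1) := by
    simpa using (tendsto_const_nhds (x := (1:ℝ))).add hdiv
  have hlog1 : Tendsto (fun p : ℕ => Real.log (1 + α / p)) atTop (nhds 0) := by
    have := (Real.continuousAt_log one_ne_zero).tendsto.comp h1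
    simpa [Function.comp_def] using this
  have hnum : Tendsto (fun p : ℕ => Real.log (α + p) - Real.log p) atTop (nhds 0) := by
    apply hlog1.congr'
    filter_upwards [eventually_ge_atTop 1] with p hp
    have hp0 : (0:ℝ) < p := by exact_mod_cast hp
    have hap : (0:ℝ) < α + p := by positivity
    rw [show (1 : ℝ) + α / p = (α + p)/p by field_simp; ring, Real.log_div hap.ne' hp0.ne']
  have hmain : Tendsto (fun p : ℕ => 1 + (Real.log (α + p) - Real.log p - Real.log α) * (Real.log p)⁻¹)
      atTop (nhds 1) := by
    have := ((hnum.sub_const (Real.log α)).mul hinv).const_add 1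
    simpa using this
  apply hmain.congr'
  filter_upwards [hlogp.eventually_gt_atTop 0] with p hp
  field_simp
  ring

include hα hμ in
lemma q_div_tendsto :
    Tendsto (fun p : ℕ => aP μ p ^ 2 / (2 * Real.log p)) atTop (nhds 1) := by
  set L : ℕ → ℝ := fun p => Real.log (α + p) - Real.log α with hL
  have hLlog' := hLlog hα
  have hL_nonneg : ∀ᶠ p : ℕ in atTop, 0 ≤ L p := by
    filter_upwards [eventually_ge_atTop 1] with p hp
    have hp0 : (0:ℝ) < p := by exact_mod_cast hp
    have : Real.log α ≤ Real.log (α + p) := Real.log_le_log hα (by linarith)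
    simpa [hL] using sub_nonneg.2 this
  -- log (2L+2) / log p → 0
  have hinner : Tendsto (fun p : ℕ => (2 * L p + 2) * ((Real.log p)⁻¹ * (Real.log p)⁻¹)) atTop (nhds 0) := by
    have h := (((hLlog').const_mul 2).add ((hinv).const_mul 2)).mul hinv
    have h2 : ((2:ℝ) * 1 + 2 * 0) * 0 = 0 := by norm_num
    rw [h2] at h
    apply h.congr'
    filter_upwards with p
    simp only [hL, div_eq_mul_inv]
    ring
  have hsq : Tendsto (fun p : ℕ => Real.sqrt (2 * L p + 2) * (Real.log p)⁻¹) atTop (nhds 0) := by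
    have h := (Real.continuous_sqrt.continuousAt (x := (0:ℝ))).tendsto.comp hinner
    simp only [Function.comp_def, Real.sqrt_zero] at h
    apply h.congr'
    filter_upwards [hlogp.eventually_gt_atTop 0, hL_nonneg] with p hp hp2
    rw [Real.sqrt_mul (by linarith), Real.sqrt_mul_self (by positivity)]
  have hloglog : Tendsto (fun p : ℕ => Real.log (2 * L p + 2) * (Real.log p)⁻¹) atTop (nhds 0) := by
    apply tendsto_of_tendsto_of_tendsto_of_le_of_le' tendsto_const_nhds
      (by simpa using hsq.const_mul 2)
    · filter_upwards [hlogp.eventually_gt_atTop 0, hL_nonneg] with p hp hp2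
      have : (0:ℝ) ≤ Real.log (2 * L p + 2) := Real.log_nonneg (by linarith)
      positivity
    · filter_upwards [hL_nonneg] with p hp2
      have h1 : Real.log (2 * L p + 2) ≤ 2 * Real.sqrt (2 * L p + 2) :=
        log_le_two_sqrt (by linarith)
      have h2 : (0:ℝ) ≤ (Real.log p)⁻¹ := by positivity
      calc Real.log (2 * L p + 2) * (Real.log p)⁻¹
          ≤ (2 * Real.sqrt (2 * L p + 2)) * (Real.log p)⁻¹ := by
            exact mul_le_mul_of_nonneg_right h1 h2
        _ = 2 * (Real.sqrt (2 * L p + 2) * (Real.log p)⁻¹) := by ring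
  -- squeeze
  have hlo : Tendsto (fun p : ℕ => (L p) / Real.log p - (Real.log p)⁻¹
      - Real.log (2 * L p + 2) * (Real.log p)⁻¹) atTop (nhds 1) := by
    have := (hLlog'.sub hinv).sub hloglog
    simpa [hL] using this
  have hhi : Tendsto (fun p : ℕ => (L p) / Real.log p + 2⁻¹ * (Real.log p)⁻¹) atTop (nhds 1) := by
    have := hLlog'.add (hinv.const_mul 2⁻¹)
    simpa [hL] using this
  apply tendsto_of_tendsto_of_tendsto_of_le_of_le' hlo hhi
  · filter_upwards [q_lower hα hμ, q_upper hα hμ, hlogp.eventually_gt_atTop 0] with p hl hu hp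
    have hq1 : (0:ℝ) < aP μ p ^2 + 1 := by positivity
    have hlog2 : Real.log (aP μ p ^2 + 1) ≤ Real.log (2 * L p + 2) :=
      Real.log_le_log hq1 (by simp only [hL]; linarith)
    have key : 2 * L p - 2 - 2 * Real.log (2 * L p + 2) ≤ aP μ p ^2 := by
      simp only [hL]; simp only [hL] at hlog2; linarith
    have h2lp : (0:ℝ) < 2 * Real.log p := by linarith
    rw [show (L p) / Real.log p - (Real.log p)⁻¹ - Real.log (2 * L p + 2) * (Real.log p)⁻¹
        = (2 * L p - 2 - 2 * Real.log (2 * L p + 2)) / (2 * Real.log p) by field_simp]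
    exact div_le_div_of_nonneg_right key h2lp.le
  · filter_upwards [q_upper hα hμ, hlogp.eventually_gt_atTop 0] with p hu hp
    have h2lp : (0:ℝ) < 2 * Real.log p := by linarith
    rw [show (L p) / Real.log p + 2⁻¹ * (Real.log p)⁻¹ = (2 * L p + 1) / (2 * Real.log p) by
      field_simp]
    exact div_le_div_of_nonneg_right (by simp only [hL]; linarith) h2lp.le

end Limits


theorem mvpIBP_moment_asymptotics' (k : ℕ) (hk : 1 ≤ k) {α : ℝ} (hα : 0 < α) {μ : ℕ → ℝ}
    (hμ : ∀ p : ℕ, 2 ≤ p →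
          stdNormalCDF (μ p / Real.sqrt (1 + tauP p ^ 2)) = α / (α + p)) :
    Filter.Tendsto
          (fun p : ℕ => ((α + p) / α) * ∫ x : ℝ, stdNormalCDF x ^ k * mvpDens μ p x)
          Filter.atTop
          (nhds (Real.exp (-2⁻¹) * ∫ x : ℝ, stdNormalCDF x ^ k * Real.exp (-x))) := by
  classical
  have hq := q_div_tendsto hα hμ
  have haneg := aP_le_neg_one hα hμ
  set a : ℕ → ℝ := aP μ with ha
  -- q → ∞
  have h2logp : Tendsto (fun p : ℕ => 2 * Real.log p) atTop atTop :=
    hlogp.const_mul_atTop two_pos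
  have hqt : Tendsto (fun p : ℕ => a p ^ 2) atTop atTop := by
    have h := Tendsto.pos_mul_atTop one_pos hq h2logp
    apply h.congr'
    filter_upwards [hlogp.eventually_gt_atTop 0] with p hp
    field_simp
  -- F2
  have hF2 : Tendsto (fun p : ℕ => (-(a p)) / tauP p) atTop (nhds 1) := by
    have h := (Real.continuous_sqrt.continuousAt (x := (1:ℝ))).tendsto.comp hq
    simp only [Function.comp_def, Real.sqrt_one] at h
    apply h.congr'
    filter_upwards [haneg, eventually_ge_atTop 2] with p h1 h2
    have ht := tau_pos h2
    rw [Real.sqrt_div (sq_nonneg _), ← tau_sq h2, Real.sqrt_sq_eq_abs, Real.sqrt_sq_eq_abs,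
      abs_of_nonpos (by linarith : a p ≤ 0), abs_of_pos ht]
  -- F3
  have hF3 : Tendsto (fun p : ℕ => Real.exp (-(a p ^ 2) / (2 * tauP p ^ 2))) atTop
      (nhds (Real.exp (-2⁻¹))) := by
    have h1 : Tendsto (fun p : ℕ => -(a p ^ 2 / (2 * Real.log p)) * 2⁻¹) atTop
        (nhds (-2⁻¹)) := by
      have := (hq.neg).mul_const (2⁻¹ : ℝ)
      simpa using this
    have h := Real.continuous_exp.continuousAt.tendsto.comp h1
    apply h.congr'
    filter_upwards [eventually_ge_atTop 2] with p h2
    have ht := tau_pos h2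
    have htsq := tau_sq h2
    have hlp : (0:ℝ) < Real.log p := by nlinarith [htsq, sq_nonneg (tauP p)]
    simp only [Function.comp_def]
    congr 1
    rw [htsq]
    ring
  -- F1
  have hF1 : Tendsto (fun p : ℕ =>
      stdNormalPDF (a p) / ((-(a p)) * stdNormalCDF (a p))) atTop (nhds 1) := by
    have hub : Tendsto (fun p : ℕ => 1 + (a p ^ 2)⁻¹) atTop (nhds 1) := by
      have := hqt.inv_tendsto_atTop.const_add (1:ℝ)
      simpa using this
    apply tendsto_of_tendsto_of_tendsto_of_le_of_le' tendsto_const_nhds hub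
    · filter_upwards [haneg] with p h1
      have hW : (0:ℝ) < -(a p) := by linarith
      have hΦ := cdf_pos (a p)
      rw [le_div_iff₀ (mul_pos hW hΦ)]
      have := mills_upper (show a p < 0 by linarith)
      nlinarith [(le_div_iff₀ hW).mp this]
    · filter_upwards [haneg] with p h1
      have hW : (0:ℝ) < -(a p) := by linarith
      have hΦ := cdf_pos (a p)
      have hq0 : (0:ℝ) < a p ^ 2 := by nlinarith
      have hml := mills_lower h1
      rw [show (1:ℝ) + (a p ^2)⁻¹ = (a p ^2 + 1)/(a p ^2) by rw [add_div, div_self hq0.ne', one_div]]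
      rw [div_le_div_iff₀ (mul_pos hW hΦ) hq0]
      rw [div_le_iff₀ (by positivity : (0:ℝ) < a p ^2 + 1)] at hml
      have hineq : (-(a p)) * stdNormalPDF (a p) ≤ (a p ^2 + 1) * stdNormalCDF (a p) := by
        linarith
      calc stdNormalPDF (a p) * a p ^ 2
          = (-(a p)) * ((-(a p)) * stdNormalPDF (a p)) := by ring
        _ ≤ (-(a p)) * ((a p ^2 + 1) * stdNormalCDF (a p)) := by
            apply mul_le_mul_of_nonneg_left hineq hW.le
        _ = (a p ^2 + 1) * (-(a p) * stdNormalCDF (a p)) := by ring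
  -- c and d
  have hd : Tendsto (fun p : ℕ => (2 * tauP p ^ 2)⁻¹) atTop (nhds 0) := by
    have h4 : Tendsto (fun p : ℕ => 4 * Real.log p) atTop atTop :=
      hlogp.const_mul_atTop (by norm_num)
    apply h4.inv_tendsto_atTop.congr'
    filter_upwards [eventually_ge_atTop 2] with p h2
    rw [tau_sq h2]
    congr 1
    ring
  have hd0 : ∀ᶠ p : ℕ in atTop, 0 ≤ (2 * tauP p ^ 2)⁻¹ := by
    filter_upwards [eventually_ge_atTop 2] with p h2
    positivity
  have hs1 : Tendsto (fun p : ℕ => Real.sqrt (1 + tauP p ^ 2) / tauP p) atTop (nhds 1) := by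
    have hinner : Tendsto (fun p : ℕ => (2 * Real.log p)⁻¹ + 1) atTop (nhds 1) := by
      have := h2logp.inv_tendsto_atTop.add_const (1:ℝ)
      simpa using this
    have h := (Real.continuous_sqrt.continuousAt (x := (1:ℝ))).tendsto.comp hinner
    simp only [Function.comp_def, Real.sqrt_one] at h
    apply h.congr'
    filter_upwards [eventually_ge_atTop 2] with p h2
    have ht := tau_pos h2
    have htsq := tau_sq h2
    have hlp2 : (0:ℝ) < 2 * Real.log p := by rw [← htsq]; positivity
    rw [show (2 * Real.log p)⁻¹ + 1 = (1 + tauP p ^2) / tauP p ^2 by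
      rw [htsq, add_div, div_self hlp2.ne', one_div]]
    rw [Real.sqrt_div (by positivity), Real.sqrt_sq ht.le]
  have hc : Tendsto (fun p : ℕ => μ p / tauP p ^ 2) atTop (nhds (-1)) := by
    have h := ((hF2.mul hs1).neg)
    have h1 : -((1:ℝ) * 1) = -1 := by norm_num
    rw [h1] at h
    apply h.congr'
    filter_upwards [eventually_ge_atTop 2] with p h2
    have ht := tau_pos h2
    have hsp : (0:ℝ) < Real.sqrt (1 + tauP p ^2) := Real.sqrt_pos.2 (by positivity)
    have hμa : μ p = a p * Real.sqrt (1 + tauP p ^ 2) := by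
      rw [ha]; unfold aP; field_simp
    rw [hμa]
    ring
  -- J
  have hJ := J_tendsto k hk (fun p => μ p / tauP p ^ 2) (fun p => (2 * tauP p ^ 2)⁻¹) hc hd hd0
  -- product
  have hprod := ((hF1.mul hF2).mul hF3).mul hJ
  rw [show ((1:ℝ) * 1 * Real.exp (-2⁻¹)) * (∫ x : ℝ, stdNormalCDF x ^ k * Real.exp (-x))
      = Real.exp (-2⁻¹) * ∫ x : ℝ, stdNormalCDF x ^ k * Real.exp (-x) by ring] at hprod
  apply hprod.congr'
  filter_upwards [eventually_ge_atTop 2, haneg] with p hp2 h1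
  have ht := tau_pos hp2
  have hΦ := cdf_pos (a p)
  have hW : (0:ℝ) < -(a p) := by linarith
  have hden : (0:ℝ) < α + p := by positivity
  have hΦa : stdNormalCDF (a p) = α / (α + p) := hμ p hp2
  have hsp : (0:ℝ) < Real.sqrt (1 + tauP p ^2) := Real.sqrt_pos.2 (by positivity)
  have hμa : μ p = a p * Real.sqrt (1 + tauP p ^ 2) := by
    rw [ha]; unfold aP; field_simp
  have hμsq : μ p ^ 2 = a p ^2 * (1 + tauP p ^2) := by
    rw [hμa, mul_pow, Real.sq_sqrt (by positivity)]
  -- step 1 : integrand identity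
  have hKint : (∫ x : ℝ, stdNormalCDF x ^ k * mvpDens μ p x)
      = ((tauP p)⁻¹ * (Real.sqrt (2 * π))⁻¹ * Real.exp (-(μ p)^2 / (2 * tauP p ^2)))
        * ∫ x : ℝ, stdNormalCDF x ^ k
            * Real.exp ((μ p / tauP p ^ 2) * x - (2 * tauP p ^ 2)⁻¹ * x^2) := by
    rw [← integral_const_mul]
    congr 1
    funext x
    unfold mvpDens stdNormalPDF
    rw [show Real.exp (-((x - μ p) / tauP p) ^ 2 / 2)
        = Real.exp (-(μ p)^2 / (2 * tauP p ^2))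
          * Real.exp ((μ p / tauP p ^ 2) * x - (2 * tauP p ^ 2)⁻¹ * x^2) by
      rw [← Real.exp_add]; congr 1; field_simp; ring]
    ring
  -- step 2 : constants identity
  have hconst : ((α + p) / α) * ((tauP p)⁻¹ * (Real.sqrt (2 * π))⁻¹
        * Real.exp (-(μ p)^2 / (2 * tauP p ^2)))
      = stdNormalPDF (a p) / ((-(a p)) * stdNormalCDF (a p)) * ((-(a p)) / tauP p)
        * Real.exp (-(a p ^ 2) / (2 * tauP p ^ 2)) := by
    have hsplit : Real.exp (-(μ p)^2 / (2 * tauP p ^2))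
        = Real.exp (-(a p)^2 / 2) * Real.exp (-(a p ^ 2) / (2 * tauP p ^ 2)) := by
      rw [← Real.exp_add]; congr 1; rw [hμsq]; field_simp; ring
    have hαp : ((α + p) / α) = (stdNormalCDF (a p))⁻¹ := by
      rw [hΦa, inv_div]
    have ha0 : a p ≠ 0 := by intro h; rw [h] at h1; linarith
    rw [hsplit, hαp]
    unfold stdNormalPDF
    have h2π : (0:ℝ) < Real.sqrt (2 * π) := Real.sqrt_pos.2 (by positivity)
    field_simp [hΦ.ne', ht.ne', ha0, h2π.ne']
  show stdNormalPDF (a p) / ((-(a p)) * stdNormalCDF (a p)) * ((-(a p)) / tauP p)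
        * Real.exp (-(a p ^ 2) / (2 * tauP p ^ 2))
        * (∫ x : ℝ, stdNormalCDF x ^ k
            * Real.exp ((μ p / tauP p ^ 2) * x - (2 * tauP p ^ 2)⁻¹ * x^2))
      = ((α + ↑p) / α) * ∫ x : ℝ, stdNormalCDF x ^ k * mvpDens μ p x
  rw [hKint, ← mul_assoc, hconst]



/-- Moment asymptotics (from the proof of Theorem 5): for every `k ≥ 1` there is a
finite constant `C_k > 0`, not depending on `α`, such that for every `α > 0`,
`lim_{p→∞} ((α+p)/α) ∫ Φ(x)^k τ_p⁻¹ φ((x-μ_p)/τ_p) dx = C_k`. -/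
theorem mvpIBP_moment_asymptotics (k : ℕ) (hk : 1 ≤ k) :
    ∃ C : ℝ, 0 < C ∧
      ∀ α : ℝ, 0 < α → ∀ μ : ℕ → ℝ,
        (∀ p : ℕ, 2 ≤ p →
          stdNormalCDF (μ p / Real.sqrt (1 + tauP p ^ 2)) = α / (α + p)) →
        Filter.Tendsto
          (fun p : ℕ => ((α + p) / α) * ∫ x : ℝ, stdNormalCDF x ^ k * mvpDens μ p x)
          Filter.atTop (nhds C) := by
  refine ⟨Real.exp (-2⁻¹) * ∫ x : ℝ, stdNormalCDF x ^ k * Real.exp (-x),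
    mul_pos (Real.exp_pos _) (limit_integral_pos k hk), ?_⟩
  intro α hα μ hμ
  exact mvpIBP_moment_asymptotics' k hk hα hμ
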